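/- Let A ∈ ℝ^{n×m} and B ∈ ℝ^{n×p}, let p ∈ [0,1]^n be a probability distribution with p_k > 0 for every k such that row k of A or B is nonzero, and let S ∈ ℝ^{s×n} be the row sampling and rescaling matrix built from s i.i.d. indices drawn from p. Then E[‖AᵀB − (S A)ᵀ S B‖_F²] = (1/s) Σ_{k=1}^n ‖A(k,:)‖₂² ‖B(k,:)‖₂² / p_k − (1/s) ‖AᵀB‖_F², and in particular E[‖AᵀB − (S A)ᵀ S B‖_F²] ≤ (1/s) Σ_{k=1}^n ‖A(k,:)‖₂² ‖B(k,:)‖₂² / p_k. -/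

import Mathlib

open Matrix MeasureTheory

/-- Squared Frobenius norm of a real matrix. -/
noncomputable def frobSq {m n : Type*} [Fintype m] [Fintype n] (M : Matrix m n ℝ) : ℝ :=
  ∑ i, ∑ j, (M i j) ^ 2

/-- Square of the smallest singular value of a matrix, as the infimum of
squared norms `‖M x‖₂²` over unit vectors `x`. -/
noncomputable def sigmaMinSq {m n : Type*} [Fintype m] [Fintype n] (M : Matrix m n ℝ) : ℝ :=
  sInf {c : ℝ | ∃ x : n → ℝ, ∑ i, (x i) ^ 2 = 1 ∧ c = ∑ j, (M.mulVec x j) ^ 2}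

/-- Square of the largest singular value of a matrix. -/
noncomputable def sigmaMaxSq {m n : Type*} [Fintype m] [Fintype n] (M : Matrix m n ℝ) : ℝ :=
  sSup {c : ℝ | ∃ x : n → ℝ, ∑ i, (x i) ^ 2 = 1 ∧ c = ∑ j, (M.mulVec x j) ^ 2}

/-- The weighted row-sampling ("RandSample") matrix determined by the sampled
indices `ξ : Fin s → Fin N` and the sampling probabilities `p`:
`S j i = 1/√(s pᵢ)` if `ξ j = i` and `0` otherwise. -/
noncomputable def randSampleMatrix {N : ℕ} (s : ℕ) (p : Fin N → ℝ) (ξ : Fin s → Fin N) :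
    Matrix (Fin s) (Fin N) ℝ :=
  fun j i => if ξ j = i then 1 / Real.sqrt (s * p i) else 0

/-- The measure on `Fin N` in which index `i` has probability `p i`. -/
noncomputable def sampleMeasure {N : ℕ} (p : Fin N → ℝ) : Measure (Fin N) :=
  ∑ i, ENNReal.ofReal (p i) • Measure.dirac i

/-- The law of `s` i.i.d. indices, each drawn from the distribution `p` on `Fin N`. -/
noncomputable def sampleMeasurePi {N : ℕ} (s : ℕ) (p : Fin N → ℝ) :
    Measure (Fin s → Fin N) :=
  Measure.pi fun _ => sampleMeasure p


/- ### auxiliary lemmas -/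

lemma sampleMeasure_singleton {N : ℕ} (p : Fin N → ℝ) (k : Fin N) :
    sampleMeasure p {k} = ENNReal.ofReal (p k) := by
  rw [sampleMeasure, Measure.finset_sum_apply]
  simp [Measure.dirac_apply, Set.indicator_apply, Finset.sum_ite_eq']

lemma sampleMeasure_prob {N : ℕ} (p : Fin N → ℝ) (hp0 : ∀ k, 0 ≤ p k) (hp1 : ∑ k, p k = 1) :
    IsProbabilityMeasure (sampleMeasure p) := by
  constructor
  rw [sampleMeasure, Measure.finset_sum_apply]
  have : ∀ i : Fin N, (ENNReal.ofReal (p i) • Measure.dirac i) Set.univ = ENNReal.ofReal (p i) := by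
    intro i; simp
  rw [Finset.sum_congr rfl fun i _ => this i, ← ENNReal.ofReal_sum_of_nonneg]
  · rw [hp1, ENNReal.ofReal_one]
  · intro i _
    exact hp0 i

lemma sum_weight_prod {n s : ℕ} (p : Fin n → ℝ) (G : Fin s → Fin n → ℝ) :
    ∑ ξ : Fin s → Fin n, ∏ t, (p (ξ t) * G t (ξ t)) = ∏ t, ∑ k, p k * G t k := by
  rw [Finset.prod_univ_sum, Fintype.piFinset_univ]

lemma B0 {n s : ℕ} (p : Fin n → ℝ) (hp1 : ∑ k, p k = 1) :
    ∑ ξ : Fin s → Fin n, ∏ t, p (ξ t) = 1 := by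
  have h := sum_weight_prod (s := s) p (fun _ _ => (1:ℝ))
  simpa [hp1] using h

lemma B1 {n s : ℕ} (p : Fin n → ℝ) (hp1 : ∑ k, p k = 1) (g : Fin n → ℝ) (t0 : Fin s) :
    ∑ ξ : Fin s → Fin n, (∏ t, p (ξ t)) * g (ξ t0) = ∑ k, p k * g k := by
  have h := sum_weight_prod p (fun t k => if t = t0 then g k else 1)
  calc ∑ ξ : Fin s → Fin n, (∏ t, p (ξ t)) * g (ξ t0)
      = ∑ ξ : Fin s → Fin n, ∏ t, (p (ξ t) * if t = t0 then g (ξ t) else 1) := by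
        refine Finset.sum_congr rfl fun ξ _ => ?_
        rw [Finset.prod_mul_distrib, Finset.prod_ite_eq' Finset.univ t0 (fun t => g (ξ t))]
        simp
    _ = ∏ t, ∑ k, p k * (if t = t0 then g k else 1) := h
    _ = ∏ t : Fin s, (if t = t0 then ∑ k, p k * g k else 1) := by
        refine Finset.prod_congr rfl fun t _ => ?_
        split <;> simp [hp1]
    _ = ∑ k, p k * g k := by
        rw [Finset.prod_ite_eq' Finset.univ t0 (fun _ => ∑ k, p k * g k)]
        simp

lemma B2 {n s : ℕ} (p : Fin n → ℝ) (hp1 : ∑ k, p k = 1) (g : Fin n → ℝ) (t0 t1 : Fin s)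
    (hne : t0 ≠ t1) :
    ∑ ξ : Fin s → Fin n, (∏ t, p (ξ t)) * (g (ξ t0) * g (ξ t1))
      = (∑ k, p k * g k) * (∑ k, p k * g k) := by
  have h := sum_weight_prod p
    (fun t k => (if t = t0 then g k else 1) * (if t = t1 then g k else 1))
  calc ∑ ξ : Fin s → Fin n, (∏ t, p (ξ t)) * (g (ξ t0) * g (ξ t1))
      = ∑ ξ : Fin s → Fin n,
          ∏ t, (p (ξ t) * ((if t = t0 then g (ξ t) else 1) * (if t = t1 then g (ξ t) else 1))) := by
        refine Finset.sum_congr rfl fun ξ _ => ?_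
        rw [Finset.prod_mul_distrib, Finset.prod_mul_distrib,
          Finset.prod_ite_eq' Finset.univ t0 (fun t => g (ξ t)),
          Finset.prod_ite_eq' Finset.univ t1 (fun t => g (ξ t))]
        simp
    _ = ∏ t, ∑ k, p k * ((if t = t0 then g k else 1) * (if t = t1 then g k else 1)) := h
    _ = ∏ t : Fin s, ((if t = t0 then (∑ k, p k * g k) else 1) *
          (if t = t1 then (∑ k, p k * g k) else 1)) := by
        refine Finset.prod_congr rfl fun t _ => ?_
        by_cases h0 : t = t0 <;> by_cases h1 : t = t1
        · exact absurd (h0 ▸ h1) hne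
        · simp [h0, h1, hne]
        · simp [h0, h1, Ne.symm hne]
        · simp [h0, h1, hp1]
    _ = (∑ k, p k * g k) * (∑ k, p k * g k) := by
        rw [Finset.prod_mul_distrib,
          Finset.prod_ite_eq' Finset.univ t0 (fun _ => ∑ k, p k * g k),
          Finset.prod_ite_eq' Finset.univ t1 (fun _ => ∑ k, p k * g k)]
        simp

lemma main_alg {n s : ℕ} (hs : 0 < s) (p : Fin n → ℝ) (hp1 : ∑ k, p k = 1)
    (c : ℝ) (g : Fin n → ℝ) (hEg : ∑ k, p k * g k = c / s) :
    ∑ ξ : Fin s → Fin n, (∏ t, p (ξ t)) * (c - ∑ t, g (ξ t)) ^ 2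
      = s * (∑ k, p k * (g k) ^ 2) - c ^ 2 / s := by
  have hs' : (s:ℝ) ≠ 0 := Nat.cast_ne_zero.2 hs.ne'
  have expand : ∀ ξ : Fin s → Fin n, (∏ t, p (ξ t)) * (c - ∑ t, g (ξ t)) ^ 2
      = (∏ t, p (ξ t)) * c ^ 2
        - 2 * c * ∑ t, (∏ r, p (ξ r)) * g (ξ t)
        + ∑ t, ∑ t', (∏ r, p (ξ r)) * (g (ξ t) * g (ξ t')) := by
    intro ξ
    have h1 : ∑ t, (∏ r, p (ξ r)) * g (ξ t) = (∏ r, p (ξ r)) * ∑ t, g (ξ t) := by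
      rw [Finset.mul_sum]
    have h2 : ∑ t, ∑ t', (∏ r, p (ξ r)) * (g (ξ t) * g (ξ t'))
        = (∏ r, p (ξ r)) * ((∑ t, g (ξ t)) * (∑ t, g (ξ t))) := by
      rw [Finset.sum_mul_sum]
      simp [Finset.mul_sum]
    rw [h1, h2]; ring
  rw [Finset.sum_congr rfl fun ξ _ => expand ξ]
  rw [Finset.sum_add_distrib, Finset.sum_sub_distrib]
  have T1 : ∑ ξ : Fin s → Fin n, (∏ t, p (ξ t)) * c ^ 2 = c ^ 2 := by
    rw [← Finset.sum_mul, B0 p hp1, one_mul]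
  have T2 : ∑ ξ : Fin s → Fin n, (2 * c * ∑ t, (∏ r, p (ξ r)) * g (ξ t))
      = 2 * c * (s * (c / s)) := by
    rw [← Finset.mul_sum]
    congr 1
    rw [Finset.sum_comm]
    rw [Finset.sum_congr rfl fun t _ => (B1 p hp1 g t).trans hEg]
    simp [mul_comm]
  have T3 : ∑ ξ : Fin s → Fin n, ∑ t, ∑ t', (∏ r, p (ξ r)) * (g (ξ t) * g (ξ t'))
      = s * ((s:ℝ) * ((c/s) * (c/s)) + (∑ k, p k * (g k)^2) - (c/s) * (c/s)) := by
    rw [Finset.sum_comm]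
    have hE : ∀ t : Fin s, ∑ ξ : Fin s → Fin n, ∑ t', (∏ r, p (ξ r)) * (g (ξ t) * g (ξ t'))
        = (s:ℝ) * ((c/s) * (c/s)) + (∑ k, p k * (g k)^2) - (c/s) * (c/s) := by
      intro t
      rw [Finset.sum_comm]
      have hE2 : ∀ t' : Fin s, ∑ ξ : Fin s → Fin n, (∏ r, p (ξ r)) * (g (ξ t) * g (ξ t'))
          = (c/s) * (c/s) + (if t = t' then (∑ k, p k * (g k)^2) - (c/s) * (c/s) else 0) := by
        intro t'
        by_cases h : t = t'
        · subst h
          have := B1 p hp1 (fun k => g k * g k) t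
          simp only [if_pos rfl]
          calc ∑ ξ : Fin s → Fin n, (∏ r, p (ξ r)) * (g (ξ t) * g (ξ t))
              = ∑ k, p k * (g k * g k) := this
            _ = ∑ k, p k * (g k)^2 := by refine Finset.sum_congr rfl fun k _ => ?_; ring
            _ = (c/s) * (c/s) + ((∑ k, p k * (g k)^2) - (c/s) * (c/s)) := by ring
        · rw [B2 p hp1 g t t' h, hEg, if_neg h, add_zero]
      rw [Finset.sum_congr rfl fun t' _ => hE2 t']
      rw [Finset.sum_add_distrib, Finset.sum_const, Finset.sum_ite_eq Finset.univ t]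
      simp
      ring
    rw [Finset.sum_congr rfl fun t _ => hE t]
    rw [Finset.sum_const]
    simp [mul_comm]
  rw [T1, T2, T3]
  field_simp
  ring

/-- expected squared Frobenius error of the randomized matrix
product: exact expression and upper bound.
`E[‖AᵀB − (SA)ᵀ SB‖_F²] = (1/s) Σ_k ‖A(k,:)‖₂² ‖B(k,:)‖₂² / p_k − (1/s) ‖AᵀB‖_F²`,
and in particular `E[‖AᵀB − (SA)ᵀ SB‖_F²] ≤ (1/s) Σ_k ‖A(k,:)‖₂² ‖B(k,:)‖₂² / p_k`. -/
theorem randomized_matmul_expected_error {n m q s : ℕ} (hs : 0 < s)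
    (A : Matrix (Fin n) (Fin m) ℝ) (B : Matrix (Fin n) (Fin q) ℝ)
    (p : Fin n → ℝ) (hp0 : ∀ k, 0 ≤ p k) (hp1 : ∑ k, p k = 1)
    (hpos : ∀ k, (A k ≠ 0 ∨ B k ≠ 0) → 0 < p k) :
    (∫ ξ, frobSq (Aᵀ * B -
          (randSampleMatrix s p ξ * A)ᵀ * (randSampleMatrix s p ξ * B))
        ∂(sampleMeasurePi s p)
      = (1 / s) * (∑ k, (∑ i, (A k i) ^ 2) * (∑ j, (B k j) ^ 2) / p k)
        - (1 / s) * frobSq (Aᵀ * B))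
    ∧ ∫ ξ, frobSq (Aᵀ * B -
          (randSampleMatrix s p ξ * A)ᵀ * (randSampleMatrix s p ξ * B))
        ∂(sampleMeasurePi s p)
      ≤ (1 / s) * (∑ k, (∑ i, (A k i) ^ 2) * (∑ j, (B k j) ^ 2) / p k) := by
  have hs' : (s:ℝ) ≠ 0 := Nat.cast_ne_zero.2 hs.ne'
  haveI hprob : IsProbabilityMeasure (sampleMeasure p) := sampleMeasure_prob p hp0 hp1
  haveI : IsProbabilityMeasure (sampleMeasurePi s p) := by
    unfold sampleMeasurePi; infer_instance
  -- mass of each atom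
  have hμ : ∀ ξ : Fin s → Fin n, ((sampleMeasurePi s p) {ξ}).toReal = ∏ t, p (ξ t) := by
    intro ξ
    rw [sampleMeasurePi, ← Set.univ_pi_singleton ξ, Measure.pi_pi, ENNReal.toReal_prod]
    exact Finset.prod_congr rfl fun t _ => by
      rw [sampleMeasure_singleton, ENNReal.toReal_ofReal (hp0 _)]
  -- pointwise value of the integrand
  have hsqrt : ∀ (x a b : ℝ), 0 ≤ x → (1 / Real.sqrt x * a) * (1 / Real.sqrt x * b) = a * b / x := by
    intro x a b hx
    rw [show (1 / Real.sqrt x * a) * (1 / Real.sqrt x * b)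
        = (a * b) * (1 / Real.sqrt x) ^ 2 by ring, div_pow, one_pow, Real.sq_sqrt hx]
    rw [mul_one_div]
  have hrow : ∀ (ξ : Fin s → Fin n) (t : Fin s) {r : ℕ} (C : Matrix (Fin n) (Fin r) ℝ) (c : Fin r),
      ∑ k, randSampleMatrix s p ξ t k * C k c = 1 / Real.sqrt (s * p (ξ t)) * C (ξ t) c := by
    intro ξ t r C c
    simp [randSampleMatrix, ite_mul, Finset.sum_ite_eq]
  have hentry : ∀ ξ : Fin s → Fin n,
      frobSq (Aᵀ * B - (randSampleMatrix s p ξ * A)ᵀ * (randSampleMatrix s p ξ * B))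
        = ∑ i, ∑ j, ((∑ k, A k i * B k j) - ∑ t, A (ξ t) i * B (ξ t) j / (s * p (ξ t))) ^ 2 := by
    intro ξ
    unfold frobSq
    refine Finset.sum_congr rfl fun i _ => Finset.sum_congr rfl fun j _ => ?_
    congr 1
    simp only [Matrix.sub_apply, Matrix.mul_apply, Matrix.transpose_apply]
    congr 1
    refine Finset.sum_congr rfl fun t _ => ?_
    rw [hrow ξ t A i, hrow ξ t B j, hsqrt _ _ _ (mul_nonneg (Nat.cast_nonneg s) (hp0 _))]
  -- expectation of a single sample term
  have hEg : ∀ i j, ∑ k, p k * (A k i * B k j / (s * p k)) = (∑ k, A k i * B k j) / s := by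
    intro i j
    rw [Finset.sum_div]
    refine Finset.sum_congr rfl fun k _ => ?_
    rcases eq_or_ne (A k i * B k j) 0 with h | h
    · simp [h]
    · have hAi : A k i ≠ 0 := left_ne_zero_of_mul h
      have hA : A k ≠ 0 := fun h0 => hAi (by rw [h0]; rfl)
      have hpk : 0 < p k := hpos k (Or.inl hA)
      field_simp
  -- integral as weighted finite sum and per-entry expectation
  have key : (∫ ξ, frobSq (Aᵀ * B -
          (randSampleMatrix s p ξ * A)ᵀ * (randSampleMatrix s p ξ * B))
        ∂(sampleMeasurePi s p))
      = ∑ i, ∑ j, ((s:ℝ) * (∑ k, p k * (A k i * B k j / (s * p k)) ^ 2)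
          - (∑ k, A k i * B k j) ^ 2 / s) := by
    rw [integral_fintype (Integrable.of_finite)]
    simp only [smul_eq_mul, Measure.real, hμ, hentry]
    calc ∑ ξ : Fin s → Fin n, (∏ t, p (ξ t)) *
            (∑ i, ∑ j, ((∑ k, A k i * B k j) - ∑ t, A (ξ t) i * B (ξ t) j / (s * p (ξ t))) ^ 2)
        = ∑ i, ∑ j, ∑ ξ : Fin s → Fin n, (∏ t, p (ξ t)) *
            ((∑ k, A k i * B k j) - ∑ t, A (ξ t) i * B (ξ t) j / (s * p (ξ t))) ^ 2 := by
          simp only [Finset.mul_sum]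
          rw [Finset.sum_comm]
          exact Finset.sum_congr rfl fun i _ => Finset.sum_comm
      _ = ∑ i, ∑ j, ((s:ℝ) * (∑ k, p k * (A k i * B k j / (s * p k)) ^ 2)
            - (∑ k, A k i * B k j) ^ 2 / s) := by
          refine Finset.sum_congr rfl fun i _ => Finset.sum_congr rfl fun j _ => ?_
          exact main_alg hs p hp1 _ (fun k => A k i * B k j / (s * p k)) (hEg i j)
  -- simplify the double sum to the stated right-hand side
  have hfin : ∑ i, ∑ j, ((s:ℝ) * (∑ k, p k * (A k i * B k j / (s * p k)) ^ 2)
          - (∑ k, A k i * B k j) ^ 2 / s)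
      = (1 / s) * (∑ k, (∑ i, (A k i) ^ 2) * (∑ j, (B k j) ^ 2) / p k)
        - (1 / s) * frobSq (Aᵀ * B) := by
    have hterm : ∀ (pk a b : ℝ), 0 ≤ pk →
        (s:ℝ) * (pk * (a * b / (s * pk)) ^ 2) = (1 / s) * (a ^ 2 * b ^ 2 / pk) := by
      intro pk a b hpk
      rcases eq_or_lt_of_le hpk with h | h
      · rw [← h]; simp
      · field_simp
    have h1 : ∑ i, ∑ j, (s:ℝ) * (∑ k, p k * (A k i * B k j / (s * p k)) ^ 2)
        = (1 / s) * (∑ k, (∑ i, (A k i) ^ 2) * (∑ j, (B k j) ^ 2) / p k) := by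
      calc ∑ i, ∑ j, (s:ℝ) * (∑ k, p k * (A k i * B k j / (s * p k)) ^ 2)
          = ∑ i, ∑ j, ∑ k, (1 / s) * ((A k i) ^ 2 * (B k j) ^ 2 / p k) := by
            refine Finset.sum_congr rfl fun i _ => Finset.sum_congr rfl fun j _ => ?_
            rw [Finset.mul_sum]
            exact Finset.sum_congr rfl fun k _ => hterm (p k) (A k i) (B k j) (hp0 k)
        _ = ∑ i, ∑ k, ∑ j, (1 / s) * ((A k i) ^ 2 * (B k j) ^ 2 / p k) :=
            Finset.sum_congr rfl fun i _ => Finset.sum_comm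
        _ = ∑ k, ∑ i, ∑ j, (1 / s) * ((A k i) ^ 2 * (B k j) ^ 2 / p k) :=
            Finset.sum_comm
        _ = (1 / s) * (∑ k, (∑ i, (A k i) ^ 2) * (∑ j, (B k j) ^ 2) / p k) := by
            rw [Finset.mul_sum]
            refine Finset.sum_congr rfl fun k _ => ?_
            rw [Finset.sum_mul_sum, Finset.sum_div]
            simp only [Finset.mul_sum, Finset.sum_div]
    have h2 : ∑ i, ∑ j, (∑ k, A k i * B k j) ^ 2 / (s:ℝ)
        = (1 / s) * frobSq (Aᵀ * B) := by
      unfold frobSq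
      rw [Finset.mul_sum]
      refine Finset.sum_congr rfl fun i _ => ?_
      rw [Finset.mul_sum]
      refine Finset.sum_congr rfl fun j _ => ?_
      rw [Matrix.mul_apply]
      simp only [Matrix.transpose_apply]
      rw [one_div, inv_mul_eq_div]
    rw [Finset.sum_congr rfl fun i (_ : i ∈ Finset.univ) => Finset.sum_sub_distrib _ _,
      Finset.sum_sub_distrib, h1, h2]
  have heq := key.trans hfin
  refine ⟨heq, ?_⟩
  rw [heq]
  have hnn : 0 ≤ (1 / (s:ℝ)) * frobSq (Aᵀ * B) := by
    apply mul_nonneg (by positivity)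
    unfold frobSq
    exact Finset.sum_nonneg fun i _ => Finset.sum_nonneg fun j _ => sq_nonneg _
  linarith
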